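/- Let a_1, a_2, a_3 be positive integers with gcd(a_1, a_2, a_3) = 1 such that a_1 is even and a_2, a_3 are odd. Then the quotient ⟨a_1, a_2, a_3⟩/2 equals the numerical semigroup generated by a_1/2, a_2, a_3, and (a_2 + a_3)/2. -/

import Mathlib

lemma mem_closure_triple (a b c n : ℕ) :
    n ∈ AddSubmonoid.closure ({a, b, c} : Set ℕ) ↔
      ∃ x y z : ℕ, n = x * a + y * b + z * c := by
  constructor
  · intro h
    induction h using AddSubmonoid.closure_induction with
    | mem w hw =>
      simp only [Set.mem_insert_iff, Set.mem_singleton_iff] at hw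
      rcases hw with h | h | h
      · exact ⟨1, 0, 0, by simp [h]⟩
      · exact ⟨0, 1, 0, by simp [h]⟩
      · exact ⟨0, 0, 1, by simp [h]⟩
    | zero => exact ⟨0, 0, 0, by simp⟩
    | add u v _ _ hu hv =>
      obtain ⟨x, y, z, h1⟩ := hu
      obtain ⟨x', y', z', h2⟩ := hv
      exact ⟨x + x', y + y', z + z', by subst h1 h2; ring⟩
  · rintro ⟨x, y, z, rfl⟩
    have ha : a ∈ AddSubmonoid.closure ({a, b, c} : Set ℕ) :=
      AddSubmonoid.subset_closure (by simp)
    have hb : b ∈ AddSubmonoid.closure ({a, b, c} : Set ℕ) :=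
      AddSubmonoid.subset_closure (by simp)
    have hc : c ∈ AddSubmonoid.closure ({a, b, c} : Set ℕ) :=
      AddSubmonoid.subset_closure (by simp)
    exact add_mem (add_mem (AddSubmonoid.nsmul_mem _ ha x) (AddSubmonoid.nsmul_mem _ hb y))
      (AddSubmonoid.nsmul_mem _ hc z)

lemma mem_closure_quad (a b c d n : ℕ) :
    n ∈ AddSubmonoid.closure ({a, b, c, d} : Set ℕ) ↔
      ∃ x y z w : ℕ, n = x * a + y * b + z * c + w * d := by
  constructor
  · intro h
    induction h using AddSubmonoid.closure_induction with
    | mem v hv =>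
      simp only [Set.mem_insert_iff, Set.mem_singleton_iff] at hv
      rcases hv with h | h | h | h
      · exact ⟨1, 0, 0, 0, by simp [h]⟩
      · exact ⟨0, 1, 0, 0, by simp [h]⟩
      · exact ⟨0, 0, 1, 0, by simp [h]⟩
      · exact ⟨0, 0, 0, 1, by simp [h]⟩
    | zero => exact ⟨0, 0, 0, 0, by simp⟩
    | add u v _ _ hu hv =>
      obtain ⟨x, y, z, w, h1⟩ := hu
      obtain ⟨x', y', z', w', h2⟩ := hv
      exact ⟨x + x', y + y', z + z', w + w', by subst h1 h2; ring⟩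
  · rintro ⟨x, y, z, w, rfl⟩
    have ha : a ∈ AddSubmonoid.closure ({a, b, c, d} : Set ℕ) :=
      AddSubmonoid.subset_closure (by simp)
    have hb : b ∈ AddSubmonoid.closure ({a, b, c, d} : Set ℕ) :=
      AddSubmonoid.subset_closure (by simp)
    have hc : c ∈ AddSubmonoid.closure ({a, b, c, d} : Set ℕ) :=
      AddSubmonoid.subset_closure (by simp)
    have hd : d ∈ AddSubmonoid.closure ({a, b, c, d} : Set ℕ) :=
      AddSubmonoid.subset_closure (by simp)
    exact add_mem (add_mem (add_mem (AddSubmonoid.nsmul_mem _ ha x)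
      (AddSubmonoid.nsmul_mem _ hb y)) (AddSubmonoid.nsmul_mem _ hc z))
      (AddSubmonoid.nsmul_mem _ hd w)

/-- Table 1, row (p,t₁,t₂,t₃) = (2,0,1,1): for `a₁` even and `a₂, a₃` odd with gcd 1,
`⟨a₁, a₂, a₃⟩/2 = ⟨a₁/2, a₂, a₃, (a₂+a₃)/2⟩`. -/
theorem quotient_two_eoo
    (a₁ a₂ a₃ : ℕ) (h₁ : 0 < a₁) (h₂ : 0 < a₂) (h₃ : 0 < a₃)
    (hgcd : Nat.gcd a₁ (Nat.gcd a₂ a₃) = 1)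
    (he₁ : Even a₁) (ho₂ : Odd a₂) (ho₃ : Odd a₃) :
    {m : ℕ | 2 * m ∈ AddSubmonoid.closure ({a₁, a₂, a₃} : Set ℕ)} =
      ↑(AddSubmonoid.closure ({a₁ / 2, a₂, a₃, (a₂ + a₃) / 2} : Set ℕ)) := by
  obtain ⟨k, hk⟩ := he₁
  obtain ⟨b, hb⟩ := ho₂
  obtain ⟨c, hc⟩ := ho₃
  have hd1 : a₁ / 2 = k := by omega
  have hd2 : (a₂ + a₃) / 2 = b + c + 1 := by omega
  ext m
  simp only [Set.mem_setOf_eq, SetLike.mem_coe, mem_closure_triple, mem_closure_quad,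
    hd1, hd2]
  constructor
  · rintro ⟨x, y, z, h⟩
    rcases Nat.even_or_odd y with ⟨u, hu⟩ | ⟨u, hu⟩
    · -- y even, hence z even
      have hz : Even z := by
        rcases Nat.even_or_odd z with hz | ⟨v, hv⟩
        · exact hz
        · exfalso; subst hk hb hc hu hv
          have : 2 * m = 2 * (x*k + u*(2*b+1) + v*(2*c+1) + c) + 1 := by ring_nf; ring_nf at h; omega
          omega
      obtain ⟨v, hv⟩ := hz
      refine ⟨x, u, v, 0, ?_⟩
      subst hk hb hc hu hv
      have : 2 * m = 2 * (x*k + u*(2*b+1) + v*(2*c+1)) := by ring_nf; ring_nf at h; omega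
      omega
    · -- y odd, hence z odd
      have hz : Odd z := by
        rcases Nat.even_or_odd z with ⟨v, hv⟩ | hz
        · exfalso; subst hk hb hc hu hv
          have : 2 * m = 2 * (x*k + u*(2*b+1) + v*(2*c+1) + b) + 1 := by ring_nf; ring_nf at h; omega
          omega
        · exact hz
      obtain ⟨v, hv⟩ := hz
      refine ⟨x, u, v, 1, ?_⟩
      subst hk hb hc hu hv
      have : 2 * m = 2 * (x*k + u*(2*b+1) + v*(2*c+1) + (b+c+1)) := by
        ring_nf; ring_nf at h; omega
      omega
  · rintro ⟨x, y, z, w, rfl⟩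
    refine ⟨x, 2*y + w, 2*z + w, ?_⟩
    subst hk hb hc
    ring
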